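/- Let u, v, p ∈ EuclideanSpace ℝ (Fin 3), let U := E(u)∘E*(v) and Ũ := E*(v)∘E(u), and let h ∈ ℝ. Then (id + h•U) ∘ E(p) ∘ (id + h•Ũ) = (1 + h⟨v,u⟩) • ( E(p) + h⟨p,v⟩ • E(u) ). In particular the exponential sandwich e^{tU} E(p) e^{tŨ} rescales E(p) by e^{t⟨v,u⟩} and adds a component in the direction u. -/

import Mathlib

open scoped RealInnerProductSpace

noncomputable section

/-- Left exterior multiplication by a vector on the exterior algebra of `ℝ³`. -/
def wedgeOp (v : EuclideanSpace ℝ (Fin 3)) :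
    ExteriorAlgebra ℝ (EuclideanSpace ℝ (Fin 3)) →ₗ[ℝ]
      ExteriorAlgebra ℝ (EuclideanSpace ℝ (Fin 3)) :=
  LinearMap.mulLeft ℝ (ExteriorAlgebra.ι ℝ v)

/-- Left contraction (interior product) along the functional `⟪v, ·⟫`. -/
def contrOp (v : EuclideanSpace ℝ (Fin 3)) :
    ExteriorAlgebra ℝ (EuclideanSpace ℝ (Fin 3)) →ₗ[ℝ]
      ExteriorAlgebra ℝ (EuclideanSpace ℝ (Fin 3)) :=
  CliffordAlgebra.contractLeft (innerₗ (EuclideanSpace ℝ (Fin 3)) v)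

private lemma wuu (u : EuclideanSpace ℝ (Fin 3))
    (y : ExteriorAlgebra ℝ (EuclideanSpace ℝ (Fin 3))) :
    ExteriorAlgebra.ι ℝ u * (ExteriorAlgebra.ι ℝ u * y) = 0 := by
  rw [← mul_assoc, ExteriorAlgebra.ι_sq_zero, zero_mul]

private lemma wanti (u p : EuclideanSpace ℝ (Fin 3))
    (y : ExteriorAlgebra ℝ (EuclideanSpace ℝ (Fin 3))) :
    ExteriorAlgebra.ι ℝ u * (ExteriorAlgebra.ι ℝ p * y)
      = -(ExteriorAlgebra.ι ℝ p * (ExteriorAlgebra.ι ℝ u * y)) := by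
  rw [← mul_assoc, ← mul_assoc, ← neg_mul,
    eq_neg_of_add_eq_zero_left (ExteriorAlgebra.ι_add_mul_swap u p)]

/-- `(id + h•U) ∘ E(p) ∘ (id + h•Ũ) = (1 + h⟨v,u⟩) • (E(p) + h⟨p,v⟩•E(u))`
for `U = E(u)∘E*(v)` and `Ũ = E*(v)∘E(u)`. -/
theorem sandwich_of_vector_op (u v p : EuclideanSpace ℝ (Fin 3)) (h : ℝ) :
    (LinearMap.id + h • (wedgeOp u ∘ₗ contrOp v)) ∘ₗ wedgeOp p ∘ₗ
        (LinearMap.id + h • (contrOp v ∘ₗ wedgeOp u))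
      = (1 + h * ⟪v, u⟫) • (wedgeOp p + (h * ⟪p, v⟫) • wedgeOp u) := by
  refine LinearMap.ext fun x => ?_
  simp only [wedgeOp, contrOp, LinearMap.add_apply, LinearMap.comp_apply, LinearMap.id_apply,
    LinearMap.smul_apply, LinearMap.mulLeft_apply, CliffordAlgebra.contractLeft_ι_mul,
    map_add, map_sub, map_smul, mul_add, mul_sub, smul_add, smul_sub, mul_smul_comm,
    innerₗ_apply_apply, CliffordAlgebra.contractLeft_contractLeft,
    mul_zero, smul_zero, sub_zero, smul_smul, wuu u, wanti u p]
  rw [real_inner_comm p v]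
  module

end
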